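/- Let p ∈ ℝ[t] be squarefree and let a11, a12, b11, b12, a21, a22, b21, b22 ∈ ℝ[t] satisfy gcd(a11, a12, b11, b12) = 1 and gcd(a21, a22, b21, b22) = 1. For t₀ ∈ ℂ, the linear polynomial (t − t₀) divides both Ξ1 (in ℂ[t,x]) and Ξ2 (in ℂ[t,x,y]) if and only if t₀ corresponds to a base point of the map on the Weierstrass curve, i.e., there exists s₀ ∈ ℂ with s₀² = p(t₀) and A1(t₀,s₀) = B1(t₀,s₀) = A2(t₀,s₀) = B2(t₀,s₀) = 0. -/

import Mathlib

/-- Complexification of a real polynomial. -/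
noncomputable def cpoly (q : Polynomial ℝ) : Polynomial ℂ :=
  q.map (algebraMap ℝ ℂ)

/-- `Ξ1(t,x) = (x·b11(t) − a11(t))² − p(t)·(x·b12(t) − a12(t))²`, regarded as an
element of `ℂ[t][x]` (outer variable `x`, inner variable `t`). -/
noncomputable def Xi1C (a11 a12 b11 b12 p : Polynomial ℝ) :
    Polynomial (Polynomial ℂ) :=
  (Polynomial.X * Polynomial.C (cpoly b11) - Polynomial.C (cpoly a11)) ^ 2 -
    Polynomial.C (cpoly p) *
      (Polynomial.X * Polynomial.C (cpoly b12) - Polynomial.C (cpoly a12)) ^ 2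

/-- The inclusion `ℝ[t] → ℂ[t,x,y]`, with `ℂ[t,x,y]` realized as
`MvPolynomial (Fin 3) ℂ` (variables `0 = t`, `1 = x`, `2 = y`). -/
noncomputable def toTXYC (q : Polynomial ℝ) : MvPolynomial (Fin 3) ℂ :=
  Polynomial.aeval (MvPolynomial.X 0) (cpoly q)

/-- `Ξ2(t,x,y) = (a22·b11 − a21·b12)(t)·x + (a11·b22 − a12·b21)(t)·y
+ (b12·b21 − b11·b22)(t)·x·y − (a11·a22 − a12·a21)(t)`, as an element of `ℂ[t,x,y]`. -/
noncomputable def Xi2C (a11 a12 b11 b12 a21 a22 b21 b22 : Polynomial ℝ) :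
    MvPolynomial (Fin 3) ℂ :=
  toTXYC (a22 * b11 - a21 * b12) * MvPolynomial.X 1 +
    toTXYC (a11 * b22 - a12 * b21) * MvPolynomial.X 2 +
    toTXYC (b12 * b21 - b11 * b22) * (MvPolynomial.X 1 * MvPolynomial.X 2) -
    toTXYC (a11 * a22 - a12 * a21)

open Polynomial in
lemma cpoly_eval (q : Polynomial ℝ) (t₀ : ℂ) :
    (cpoly q).eval t₀ = Polynomial.aeval t₀ q := by
  simp [cpoly, eval_map, aeval_def]

open Polynomial in
lemma C_X_sub_C_dvd_iff (t₀ : ℂ) (F : Polynomial (Polynomial ℂ)) :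
    C (X - C t₀) ∣ F ↔ F.map (evalRingHom t₀) = 0 := by
  rw [C_dvd_iff_dvd_coeff]
  constructor
  · intro h; ext i
    simpa [coeff_map] using dvd_iff_isRoot.mp (h i)
  · intro h i
    rw [dvd_iff_isRoot, IsRoot]
    have := congrArg (fun G => Polynomial.coeff G i) h
    simpa [coeff_map] using this

lemma eval_toTXYC (q : Polynomial ℝ) (v : Fin 3 → ℂ) :
    MvPolynomial.eval v (toTXYC q) = (cpoly q).eval (v 0) := by
  have h := (Polynomial.aeval_algHom_apply (MvPolynomial.aeval v) (MvPolynomial.X 0) (cpoly q)).symm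
  simp only [MvPolynomial.aeval_X] at h
  calc MvPolynomial.eval v (toTXYC q) = MvPolynomial.aeval v (toTXYC q) := by
        rw [← MvPolynomial.coe_aeval_eq_eval]; rfl
    _ = Polynomial.aeval (v 0) (cpoly q) := h
    _ = (cpoly q).eval (v 0) := by
        simp [Polynomial.aeval_def, Polynomial.eval₂_eq_eval_map]

lemma dvd_toTXYC (q : Polynomial ℝ) (t₀ : ℂ) (h : (cpoly q).eval t₀ = 0) :
    (MvPolynomial.X 0 - MvPolynomial.C t₀ : MvPolynomial (Fin 3) ℂ) ∣ toTXYC q := by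
  have h1 : (Polynomial.X - Polynomial.C t₀) ∣ cpoly q := Polynomial.dvd_iff_isRoot.mpr h
  have h2 := map_dvd (Polynomial.aeval (MvPolynomial.X 0 : MvPolynomial (Fin 3) ℂ)) h1
  simpa [toTXYC] using h2

lemma cpoly_eval_prod_sub (q r u w : Polynomial ℝ) (t₀ : ℂ) :
    (cpoly (q * r - u * w)).eval t₀ =
      (cpoly q).eval t₀ * (cpoly r).eval t₀ - (cpoly u).eval t₀ * (cpoly w).eval t₀ := by
  simp [cpoly_eval, map_sub, map_mul]

noncomputable def evr (t₀ : ℂ) : Polynomial ℝ →+* ℂ :=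
  (Polynomial.evalRingHom t₀).comp (Polynomial.mapRingHom (algebraMap ℝ ℂ))

lemma evr_apply (t₀ : ℂ) (q : Polynomial ℝ) : evr t₀ q = (cpoly q).eval t₀ := rfl

/-- `(t − t₀)` divides both `Ξ1` (in `ℂ[t,x]`) and `Ξ2` (in `ℂ[t,x,y]`) iff `t₀`
corresponds to a base point of the map on the Weierstrass curve, i.e. there is
`s₀ ∈ ℂ` with `s₀² = p(t₀)` and `A1 = B1 = A2 = B2 = 0` at `(t₀,s₀)`. -/
theorem t_factor_iff_base_point (a11 a12 b11 b12 a21 a22 b21 b22 p : Polynomial ℝ)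
    (hp : Squarefree p)
    (hgcd1 : ∀ d : Polynomial ℝ, d ∣ a11 → d ∣ a12 → d ∣ b11 → d ∣ b12 → IsUnit d)
    (hgcd2 : ∀ d : Polynomial ℝ, d ∣ a21 → d ∣ a22 → d ∣ b21 → d ∣ b22 → IsUnit d)
    (t₀ : ℂ) :
    (Polynomial.C (Polynomial.X - Polynomial.C t₀) ∣ Xi1C a11 a12 b11 b12 p ∧
        (MvPolynomial.X 0 - MvPolynomial.C t₀) ∣
          Xi2C a11 a12 b11 b12 a21 a22 b21 b22) ↔
      ∃ s₀ : ℂ, s₀ ^ 2 = (cpoly p).eval t₀ ∧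
        (cpoly a11).eval t₀ + s₀ * (cpoly a12).eval t₀ = 0 ∧
        (cpoly b11).eval t₀ + s₀ * (cpoly b12).eval t₀ = 0 ∧
        (cpoly a21).eval t₀ + s₀ * (cpoly a22).eval t₀ = 0 ∧
        (cpoly b21).eval t₀ + s₀ * (cpoly b22).eval t₀ = 0 := by
  set α1 := (cpoly a11).eval t₀ with hα1
  set α2 := (cpoly a12).eval t₀ with hα2
  set β1 := (cpoly b11).eval t₀ with hβ1
  set β2 := (cpoly b12).eval t₀ with hβ2
  set γ1 := (cpoly a21).eval t₀ with hγ1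
  set γ2 := (cpoly a22).eval t₀ with hγ2
  set δ1 := (cpoly b21).eval t₀ with hδ1
  set δ2 := (cpoly b22).eval t₀ with hδ2
  set π := (cpoly p).eval t₀ with hπ
  constructor
  · rintro ⟨h1, h2⟩
    rw [C_X_sub_C_dvd_iff] at h1
    simp only [Xi1C, Polynomial.map_sub, Polynomial.map_pow, Polynomial.map_mul,
      Polynomial.map_X, Polynomial.map_C, Polynomial.coe_evalRingHom] at h1
    have E0 := congrArg (Polynomial.eval (0:ℂ)) h1
    have E1 := congrArg (Polynomial.eval (1:ℂ)) h1
    have Em := congrArg (Polynomial.eval (-1:ℂ)) h1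
    simp only [Polynomial.eval_sub, Polynomial.eval_pow, Polynomial.eval_mul,
      Polynomial.eval_X, Polynomial.eval_C, Polynomial.eval_zero, ← hα1, ← hα2,
      ← hβ1, ← hβ2, ← hπ] at E0 E1 Em
    have e0 : α1 ^ 2 = π * α2 ^ 2 := by linear_combination E0
    have e1 : α1 * β1 = π * (α2 * β2) := by linear_combination (1/4 : ℂ) * Em - (1/4 : ℂ) * E1
    have e2 : β1 ^ 2 = π * β2 ^ 2 := by
      linear_combination (1/2 : ℂ) * E1 + (1/2 : ℂ) * Em - E0
    obtain ⟨r, hr⟩ := h2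
    have G : ∀ x y : ℂ,
        (γ2 * β1 - γ1 * β2) * x + (α1 * δ2 - α2 * δ1) * y +
          (β2 * δ1 - β1 * δ2) * (x * y) - (α1 * γ2 - α2 * γ1) = 0 := by
      intro x y
      have h := congrArg (MvPolynomial.eval ![t₀, x, y]) hr
      simp only [Xi2C, map_sub, map_add, map_mul, MvPolynomial.eval_X,
        MvPolynomial.eval_C, eval_toTXYC, Matrix.cons_val_zero, Matrix.cons_val_one,
        Matrix.head_cons, cpoly_eval_prod_sub, Matrix.cons_val_two, Matrix.tail_cons,
        ← hα1, ← hα2, ← hβ1, ← hβ2, ← hγ1, ← hγ2, ← hδ1, ← hδ2] at h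
      rw [h]; ring
    have g4 : α1 * γ2 - α2 * γ1 = 0 := by linear_combination - G 0 0
    have g1 : γ2 * β1 - γ1 * β2 = 0 := by linear_combination G 1 0 - G 0 0
    have g2 : α1 * δ2 - α2 * δ1 = 0 := by linear_combination G 0 1 - G 0 0
    have g3 : β2 * δ1 - β1 * δ2 = 0 := by
      linear_combination G 1 1 - G 1 0 - G 0 1 + G 0 0
    have hnd : ¬ (α1 = 0 ∧ α2 = 0 ∧ β1 = 0 ∧ β2 = 0) := by
      rintro ⟨z1, z2, z3, z4⟩
      set g := EuclideanDomain.gcd a11 (EuclideanDomain.gcd a12 (EuclideanDomain.gcd b11 b12))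
        with hg
      have hu : IsUnit g := by
        refine hgcd1 g (EuclideanDomain.gcd_dvd_left _ _) ?_ ?_ ?_
        · exact (EuclideanDomain.gcd_dvd_right _ _).trans (EuclideanDomain.gcd_dvd_left _ _)
        · exact (EuclideanDomain.gcd_dvd_right _ _).trans
            ((EuclideanDomain.gcd_dvd_right _ _).trans (EuclideanDomain.gcd_dvd_left _ _))
        · exact (EuclideanDomain.gcd_dvd_right _ _).trans
            ((EuclideanDomain.gcd_dvd_right _ _).trans (EuclideanDomain.gcd_dvd_right _ _))
      have hb11' : evr t₀ b11 = 0 := z3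
      have hb12' : evr t₀ b12 = 0 := z4
      have ha11' : evr t₀ a11 = 0 := z1
      have ha12' : evr t₀ a12 = 0 := z2
      have k3 : evr t₀ (EuclideanDomain.gcd b11 b12) = 0 := by
        rw [EuclideanDomain.gcd_eq_gcd_ab b11 b12, map_add, map_mul, map_mul, hb11', hb12']
        ring
      have k2 : evr t₀ (EuclideanDomain.gcd a12 (EuclideanDomain.gcd b11 b12)) = 0 := by
        rw [EuclideanDomain.gcd_eq_gcd_ab a12 (EuclideanDomain.gcd b11 b12), map_add,
          map_mul, map_mul, ha12', k3]
        ring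
      have k1 : evr t₀ g = 0 := by
        rw [hg, EuclideanDomain.gcd_eq_gcd_ab a11
          (EuclideanDomain.gcd a12 (EuclideanDomain.gcd b11 b12)), map_add,
          map_mul, map_mul, ha11', k2]
        ring
      obtain ⟨c, hc, hcg⟩ := Polynomial.isUnit_iff.mp hu
      rw [← hcg] at k1
      have hcc : evr t₀ (Polynomial.C c) = (c : ℂ) := by
        simp [evr, cpoly, Complex.coe_algebraMap]
      rw [hcc] at k1
      exact hc.ne_zero (by exact_mod_cast k1)
    by_cases hb2 : β2 = 0
    · have hb1 : β1 = 0 := by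
        have h : β1 ^ 2 = 0 := by rw [e2, hb2]; ring
        exact pow_eq_zero_iff two_ne_zero |>.mp h
      by_cases ha2 : α2 = 0
      · have ha1 : α1 = 0 := by
          have h : α1 ^ 2 = 0 := by rw [e0, ha2]; ring
          exact pow_eq_zero_iff two_ne_zero |>.mp h
        exact absurd ⟨ha1, ha2, hb1, hb2⟩ hnd
      · refine ⟨-α1 / α2, ?_, ?_, ?_, ?_, ?_⟩
        · field_simp
          linear_combination e0
        · field_simp; ring
        · rw [hb1, hb2]; ring
        · field_simp
          linear_combination -g4
        · field_simp
          linear_combination -g2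
    · refine ⟨-β1 / β2, ?_, ?_, ?_, ?_, ?_⟩
      · field_simp
        linear_combination e2
      · by_cases hb1 : β1 = 0
        · have hπ0 : π = 0 := by
            have : π * β2 ^ 2 = 0 := by rw [← e2, hb1]; ring
            rcases mul_eq_zero.mp this with h | h
            · exact h
            · exact absurd (pow_eq_zero_iff two_ne_zero |>.mp h) hb2
          have ha1 : α1 = 0 := by
            have : α1 ^ 2 = 0 := by rw [e0, hπ0]; ring
            exact pow_eq_zero_iff two_ne_zero |>.mp this
          rw [ha1, hb1]; ring
        · have key : β1 * (α1 * β2 - β1 * α2) = 0 := by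
            linear_combination β2 * e1 - α2 * e2
          have key2 : α1 * β2 - β1 * α2 = 0 := by
            rcases mul_eq_zero.mp key with h | h
            · exact absurd h hb1
            · exact h
          field_simp
          linear_combination key2
      · field_simp; ring
      · field_simp
        linear_combination -g1
      · field_simp
        linear_combination g3
  · rintro ⟨s, hs, hA1, hB1, hA2, hB2⟩
    constructor
    · rw [C_X_sub_C_dvd_iff]
      simp only [Xi1C, Polynomial.map_sub, Polynomial.map_pow, Polynomial.map_mul,
        Polynomial.map_X, Polynomial.map_C, Polynomial.coe_evalRingHom, ← hα1, ← hα2,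
        ← hβ1, ← hβ2, ← hπ]
      have ha : α1 = -s * α2 := by linear_combination hA1
      have hb : β1 = -s * β2 := by linear_combination hB1
      rw [ha, hb, ← hs]
      simp only [map_neg, map_mul, map_pow]
      ring
    · rw [Xi2C]
      have d1 := dvd_toTXYC (a22 * b11 - a21 * b12) t₀ (by
        rw [cpoly_eval_prod_sub, ← hγ2, ← hβ1, ← hγ1, ← hβ2]
        linear_combination γ2 * hB1 - β2 * hA2)
      have d2 := dvd_toTXYC (a11 * b22 - a12 * b21) t₀ (by
        rw [cpoly_eval_prod_sub, ← hα1, ← hδ2, ← hα2, ← hδ1]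
        linear_combination δ2 * hA1 - α2 * hB2)
      have d3 := dvd_toTXYC (b12 * b21 - b11 * b22) t₀ (by
        rw [cpoly_eval_prod_sub, ← hβ2, ← hδ1, ← hβ1, ← hδ2]
        linear_combination β2 * hB2 - δ2 * hB1)
      have d4 := dvd_toTXYC (a11 * a22 - a12 * a21) t₀ (by
        rw [cpoly_eval_prod_sub, ← hα1, ← hγ2, ← hα2, ← hγ1]
        linear_combination γ2 * hA1 - α2 * hA2)
      exact dvd_sub (dvd_add (dvd_add (d1.mul_right _) (d2.mul_right _)) (d3.mul_right _)) d4
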